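/- Let (X,d,μ) be a metric measure space in which closed balls have finite positive measure and μ is doubling. Define d̃(x,y) as the infimum of μ(B) over all closed balls B containing both x and y. Then d̃ is a quasi-distance: it is symmetric, vanishes iff x = y (assuming μ has no atoms), and there exists A ≥ 1 with d̃(x,y) ≤ A(d̃(x,z) + d̃(z,y)) for all x,y,z ∈ X. -/

import Mathlib

open Real MeasureTheory Metric

/-- The infimum of the measures of closed balls containing both `x` and `y`. -/
noncomputable def qdist {X : Type*} [MetricSpace X] [MeasurableSpace X]
    (μ : Measure X) (x y : X) : ENNReal :=
  ⨅ (z : X) (r : ℝ) (_ : x ∈ Metric.closedBall z r ∧ y ∈ Metric.closedBall z r),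
    μ (Metric.closedBall z r)

lemma qdist_le_ball {X : Type*} [MetricSpace X] [MeasurableSpace X]
    (μ : Measure X) {x y c : X} {r : ℝ}
    (hx : x ∈ Metric.closedBall c r) (hy : y ∈ Metric.closedBall c r) :
    qdist μ x y ≤ μ (Metric.closedBall c r) :=
  iInf_le_of_le c (iInf_le_of_le r (iInf_le _ ⟨hx, hy⟩))

theorem qdist_is_quasi_distance {X : Type*} [MetricSpace X] [MeasurableSpace X]
    [BorelSpace X] (μ : Measure X)
    (hpos : ∀ (x : X) (r : ℝ), 0 < r → 0 < μ (Metric.closedBall x r))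
    (hfin : ∀ (x : X) (r : ℝ), μ (Metric.closedBall x r) < ⊤)
    (C : ENNReal) (hC : C < ⊤)
    (hdoubling : ∀ (x : X) (r : ℝ), 0 < r →
      μ (Metric.closedBall x (2 * r)) ≤ C * μ (Metric.closedBall x r)) :
    (∀ x y : X, qdist μ x y = qdist μ y x) ∧
    ((∀ x : X, μ {x} = 0) → ∀ x y : X, qdist μ x y = 0 ↔ x = y) ∧
    (∃ A : ENNReal, 1 ≤ A ∧ A < ⊤ ∧ ∀ x y z : X,
      qdist μ x y ≤ A * (qdist μ x z + qdist μ z y)) := by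
  have hCne : C ≠ ⊤ := hC.ne
  -- qdist is finite
  have hqfin : ∀ x y : X, qdist μ x y ≠ ⊤ := by
    intro x y
    refine ne_top_of_le_ne_top (hfin x (dist x y)).ne
      (qdist_le_ball μ (by simp [mem_closedBall, dist_nonneg]) ?_)
    simp [mem_closedBall, dist_comm]
  refine ⟨?_, ?_, ?_⟩
  · -- symmetry
    intro x y
    exact iInf_congr fun c => iInf_congr fun r =>
      iInf_congr_Prop and_comm fun _ => rfl
  · -- vanishing
    intro hatom x y
    constructor
    · intro h
      by_contra hne
      have hC0 : C ≠ 0 := by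
        intro hc0
        have h1 := hdoubling x 1 one_pos
        rw [hc0, zero_mul] at h1
        exact absurd (le_antisymm h1 zero_le) (hpos x (2 * 1) (by norm_num)).ne'
      have hd : 0 < dist x y := dist_pos.mpr hne
      set m := μ (Metric.closedBall x (dist x y / 2)) with hm
      have hmpos : 0 < m := hpos _ _ (by positivity)
      have key : ∀ (c : X) (r : ℝ), x ∈ Metric.closedBall c r →
          y ∈ Metric.closedBall c r → m ≤ C * μ (Metric.closedBall c r) := by
        intro c r hxc hyc
        rw [mem_closedBall] at hxc hyc
        have hr : dist x y / 2 ≤ r := by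
          have := dist_triangle x c y
          rw [dist_comm c y] at this
          linarith
        have hsub : Metric.closedBall x (dist x y / 2) ⊆ Metric.closedBall c (2 * r) := by
          intro w hw
          rw [mem_closedBall] at hw ⊢
          calc dist w c ≤ dist w x + dist x c := dist_triangle w x c
            _ ≤ dist x y / 2 + r := add_le_add hw hxc
            _ ≤ 2 * r := by linarith
        calc m ≤ μ (Metric.closedBall c (2 * r)) := measure_mono hsub
          _ ≤ C * μ (Metric.closedBall c r) := hdoubling c r (by linarith)
      -- extract a small ball from qdist = 0
      have hlt : qdist μ x y < m / C := by
        rw [h]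
        exact ENNReal.div_pos hmpos.ne' hCne
      simp only [qdist, iInf_lt_iff] at hlt
      obtain ⟨c, r, ⟨hxc, hyc⟩, hball⟩ := hlt
      have := key c r hxc hyc
      exact absurd this (ENNReal.mul_lt_of_lt_div' hball).not_ge
    · rintro rfl
      have hanti : Antitone (fun n : ℕ => Metric.closedBall x (1 / (n + 1))) := by
        intro a b hab
        apply Metric.closedBall_subset_closedBall
        have : (a : ℝ) + 1 ≤ (b : ℝ) + 1 := by exact_mod_cast Nat.succ_le_succ hab
        apply one_div_le_one_div_of_le (by positivity) this
      have hInter : (⋂ n : ℕ, Metric.closedBall x (1 / (n + 1))) = {x} := by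
        ext w
        simp only [Set.mem_iInter, mem_closedBall, Set.mem_singleton_iff]
        constructor
        · intro hw
          have : dist w x ≤ 0 := by
            by_contra hcon
            push_neg at hcon
            obtain ⟨n, hn⟩ := exists_nat_one_div_lt hcon
            exact absurd (hw n) (by linarith)
          exact dist_le_zero.mp this
        · rintro rfl; intro n; simp [dist_self]; positivity
      have heq := hanti.measure_iInter (μ := μ)
        (fun n => (measurableSet_closedBall).nullMeasurableSet)
        ⟨0, (hfin x _).ne⟩
      rw [hInter, hatom x] at heq
      have hle : qdist μ x x ≤ ⨅ n : ℕ, μ (Metric.closedBall x (1 / (n + 1))) := by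
        refine le_iInf fun n => qdist_le_ball μ ?_ ?_ <;>
          · simp [mem_closedBall, dist_self]; positivity
      rw [← heq] at hle
      exact le_antisymm hle zero_le
  · -- quasi triangle inequality
    refine ⟨max 1 (C * C), le_max_left _ _, max_lt ENNReal.one_lt_top
      (ENNReal.mul_lt_top hC hC), ?_⟩
    intro x y z
    set A := max 1 (C * C) with hA
    have hA1 : (1 : ENNReal) ≤ A := le_max_left _ _
    have hAC : C * C ≤ A := le_max_right _ _
    have hAne : A ≠ ⊤ := (max_lt ENNReal.one_lt_top (ENNReal.mul_lt_top hC hC)).ne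
    have key : ∀ (c1 : X) (r1 : ℝ) (c2 : X) (r2 : ℝ),
        x ∈ Metric.closedBall c1 r1 → z ∈ Metric.closedBall c1 r1 →
        z ∈ Metric.closedBall c2 r2 → y ∈ Metric.closedBall c2 r2 →
        qdist μ x y ≤ A * (μ (Metric.closedBall c1 r1) + μ (Metric.closedBall c2 r2)) := by
      intro c1 r1 c2 r2 hx1 hz1 hz2 hy2
      rw [mem_closedBall] at hx1 hz1 hz2 hy2
      have hdxz : dist x z ≤ 2 * r1 := by
        have := dist_triangle x c1 z
        rw [dist_comm c1 z] at this; linarith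
      have hdzy : dist z y ≤ 2 * r2 := by
        have := dist_triangle z c2 y
        rw [dist_comm c2 y] at this; linarith
      rcases le_or_gt r1 0 with h1 | h1
      · -- x = z
        have hxz : x = z := by
          have : dist x z ≤ 0 := by linarith
          exact dist_le_zero.mp this
        subst hxz
        calc qdist μ x y ≤ μ (Metric.closedBall c2 r2) := qdist_le_ball μ hz2 hy2
          _ ≤ μ (Metric.closedBall c1 r1) + μ (Metric.closedBall c2 r2) := le_add_self
          _ ≤ A * _ := le_mul_of_one_le_left zero_le hA1
      rcases le_or_gt r2 0 with h2 | h2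
      · have hzy : z = y := by
          have : dist z y ≤ 0 := by linarith
          exact dist_le_zero.mp this
        subst hzy
        calc qdist μ x z ≤ μ (Metric.closedBall c1 r1) := qdist_le_ball μ hx1 hz1
          _ ≤ μ (Metric.closedBall c1 r1) + μ (Metric.closedBall c2 r2) := le_self_add
          _ ≤ A * _ := le_mul_of_one_le_left zero_le hA1
      -- main case: both radii positive; use the larger one
      have hCC : ∀ (c : X) (r : ℝ), 0 < r →
          μ (Metric.closedBall c (2 * (2 * r))) ≤ C * C * μ (Metric.closedBall c r) := by
        intro c r hr
        calc μ (Metric.closedBall c (2 * (2 * r)))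
            ≤ C * μ (Metric.closedBall c (2 * r)) := hdoubling c (2 * r) (by linarith)
          _ ≤ C * (C * μ (Metric.closedBall c r)) :=
              mul_le_mul_right (hdoubling c r hr) C
          _ = C * C * μ (Metric.closedBall c r) := by ring
      rcases le_total r2 r1 with hr | hr
      · -- big ball around c1 with radius 4 r1
        have hx4 : x ∈ Metric.closedBall c1 (2 * (2 * r1)) := by
          rw [mem_closedBall]; linarith
        have hy4 : y ∈ Metric.closedBall c1 (2 * (2 * r1)) := by
          rw [mem_closedBall]
          have := dist_triangle y z c1
          rw [dist_comm y z] at this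
          linarith
        calc qdist μ x y ≤ μ (Metric.closedBall c1 (2 * (2 * r1))) := qdist_le_ball μ hx4 hy4
          _ ≤ C * C * μ (Metric.closedBall c1 r1) := hCC c1 r1 h1
          _ ≤ A * (μ (Metric.closedBall c1 r1) + μ (Metric.closedBall c2 r2)) :=
              mul_le_mul' hAC le_self_add
      · have hy4 : y ∈ Metric.closedBall c2 (2 * (2 * r2)) := by
          rw [mem_closedBall]; linarith
        have hx4 : x ∈ Metric.closedBall c2 (2 * (2 * r2)) := by
          rw [mem_closedBall]
          have := dist_triangle x z c2
          linarith
        calc qdist μ x y ≤ μ (Metric.closedBall c2 (2 * (2 * r2))) := qdist_le_ball μ hx4 hy4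
          _ ≤ C * C * μ (Metric.closedBall c2 r2) := hCC c2 r2 h2
          _ ≤ A * (μ (Metric.closedBall c1 r1) + μ (Metric.closedBall c2 r2)) :=
              mul_le_mul' hAC le_add_self
    -- pass to the infimum via an ε argument
    refine ENNReal.le_of_forall_pos_le_add fun ε hε _ => ?_
    have hA0 : A ≠ 0 := by
      intro h; exact absurd (h ▸ hA1) (by simp)
    set δ : ENNReal := ε / (2 * A) with hδ
    have hδ0 : δ ≠ 0 := by
      refine (ENNReal.div_pos (by exact_mod_cast hε.ne') ?_).ne'
      exact ENNReal.mul_ne_top (by norm_num) hAne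
    have h1 : qdist μ x z < qdist μ x z + δ := ENNReal.lt_add_right (hqfin x z) hδ0
    have h2 : qdist μ z y < qdist μ z y + δ := ENNReal.lt_add_right (hqfin z y) hδ0
    rw [qdist] at h1 h2
    simp only [iInf_lt_iff] at h1 h2
    obtain ⟨c1, r1, ⟨hx1, hz1⟩, hb1⟩ := h1
    obtain ⟨c2, r2, ⟨hz2, hy2⟩, hb2⟩ := h2
    calc qdist μ x y
        ≤ A * (μ (Metric.closedBall c1 r1) + μ (Metric.closedBall c2 r2)) :=
          key c1 r1 c2 r2 hx1 hz1 hz2 hy2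
      _ ≤ A * ((qdist μ x z + δ) + (qdist μ z y + δ)) :=
          mul_le_mul_right (add_le_add hb1.le hb2.le) A
      _ = A * (qdist μ x z + qdist μ z y) + 2 * A * δ := by ring
      _ ≤ A * (qdist μ x z + qdist μ z y) + ε := by
          refine add_le_add_right ?_ _
          exact ENNReal.mul_div_le
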